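/- The extension μ(M, t, f) = (N, τ, φ) of a monoid M by a compatible endomorphism f and element t (satisfying st = tf(s) for all s) is again a monoid, φ is an endomorphism of N, and στ = τφ(σ) for all σ ∈ N. -/
import Mathlib


/-- `φ` of the extension `μ(M,t,f)`: `φ(τᵉs) = tᵉ f(s)`, where `Sum.inl s`
encodes `s` and `Sum.inr s` encodes `τs`. -/
def muPhi {M : Type*} [Monoid M] (t : M) (f : M → M) : M ⊕ M → M
  | Sum.inl s => f s
  | Sum.inr s => t * f s

/-- Multiplication of the extension `N = M ⊔ τM`:
`(τ^{e₁}s₁)(τ^{e₂}s₂) = τ^{e₁}(s₁s₂)` if `e₂ = 0`, and `τ(φ(τ^{e₁}s₁)s₂)` if `e₂ = 1`. -/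
def muMul {M : Type*} [Monoid M] (t : M) (f : M → M) : M ⊕ M → M ⊕ M → M ⊕ M
  | Sum.inl s₁, Sum.inl s₂ => Sum.inl (s₁ * s₂)
  | Sum.inr s₁, Sum.inl s₂ => Sum.inr (s₁ * s₂)
  | x, Sum.inr s₂ => Sum.inr (muPhi t f x * s₂)

/-- if `f` is an endomorphism of `M` and `st = t f(s)` for all
`s`, then `μ(M,t,f) = (N,τ,φ)` is a monoid with identity `1 ∈ M`, `φ` is an
endomorphism of `N`, and `στ = τ φ(σ)` for every `σ ∈ N`. -/
theorem stmt_16 (M : Type*) [Monoid M] (t : M) (f : M → M)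
    (hf1 : f 1 = 1) (hfmul : ∀ x y : M, f (x * y) = f x * f y)
    (hcom : ∀ s : M, s * t = t * f s) :
    (∀ x y z : M ⊕ M, muMul t f (muMul t f x y) z = muMul t f x (muMul t f y z)) ∧
    (∀ x : M ⊕ M, muMul t f (Sum.inl 1) x = x ∧ muMul t f x (Sum.inl 1) = x) ∧
    (∀ x y : M ⊕ M, (Sum.inl (muPhi t f (muMul t f x y)) : M ⊕ M) =
      muMul t f (Sum.inl (muPhi t f x)) (Sum.inl (muPhi t f y))) ∧
    (∀ σ : M ⊕ M, muMul t f σ (Sum.inr 1) =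
      muMul t f (Sum.inr 1) (Sum.inl (muPhi t f σ))) := by
  have key : ∀ s x : M, s * (t * x) = t * (f s * x) := fun s x => by
    rw [← mul_assoc, hcom, mul_assoc]
  refine ⟨?_, ?_, ?_, ?_⟩
  · rintro (a | a) (b | b) (c | c) <;>
      simp [muMul, muPhi, hfmul, mul_assoc, key]
  · rintro (a | a) <;> simp [muMul, muPhi, hf1]
  · rintro (a | a) (b | b) <;>
      simp [muMul, muPhi, hfmul, mul_assoc, key]
  · rintro (a | a) <;> simp [muMul, muPhi]
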